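/- Let d ≥ 1 and order ℕ_ω^d componentwise, where ℕ_ω = ℕ ∪ {ω} with n ≤ ω for all n. For every n ∈ ℕ, A_n(ℕ_ω^d) is exactly the set of d-tuples having fewer than n components equal to ω. -/

import Mathlib

/-- `AccelSet Z 0 = ∅` and `AccelSet Z (n+1)` is the set of `z` such that every
acceleration candidate (infinite strictly increasing sequence) below `z` goes
through `AccelSet Z n`. -/
def AccelSet (Z : Type*) [PartialOrder Z] : ℕ → Set Z
  | 0 => ∅
  | n + 1 => {z : Z | ∀ f : ℕ → Z,
      (∀ i, f i < f (i + 1)) → (∀ i, f i ≤ z) → ∃ i, f i ∈ AccelSet Z n}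

private lemma enat_toNat_lt_toNat {a b : ℕ∞} (h : a < b) (hb : b ≠ ⊤) :
    a.toNat < b.toNat := by
  have ha : a ≠ ⊤ := (h.trans (lt_top_iff_ne_top.mpr hb)).ne
  rw [← ENat.coe_toNat ha, ← ENat.coe_toNat hb] at h
  exact_mod_cast h

/-- In `ℕ_ω^d` ordered componentwise, `A_n` is exactly the set of `d`-tuples
with fewer than `n` components equal to `ω`. -/
theorem accelSet_natOmega_pow (d : ℕ) (hd : 1 ≤ d) (n : ℕ) :
    AccelSet (Fin d → ℕ∞) n =
      {z : Fin d → ℕ∞ | {i : Fin d | z i = ⊤}.ncard < n} := by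
  induction n with
  | zero => ext z; simp [AccelSet]
  | succ n ih =>
    ext z
    simp only [AccelSet, Set.mem_setOf_eq, ih]
    constructor
    · intro h
      by_contra hge
      push_neg at hge
      have hne : {i : Fin d | z i = ⊤}.Nonempty := by
        rw [← Set.ncard_pos (Set.toFinite _)]; omega
      obtain ⟨i0, hi0⟩ := hne
      have hi0' : z i0 = ⊤ := hi0
      set f : ℕ → Fin d → ℕ∞ := fun j i => if i = i0 then (j : ℕ∞) else z i with hf
      have hmono : ∀ j, f j < f (j + 1) := by
        intro j
        rw [Pi.lt_def]
        refine ⟨fun i => ?_, i0, ?_⟩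
        · simp only [hf]
          split
          · exact_mod_cast Nat.le_succ j
          · exact le_refl _
        · simp only [hf, if_pos rfl]
          exact_mod_cast Nat.lt_succ_self j
      have hle : ∀ j, f j ≤ z := by
        intro j i
        simp only [hf]
        split
        · next hi => rw [hi, hi0']; exact le_top
        · exact le_refl _
      obtain ⟨j, hj⟩ := h f hmono hle
      have hset : {i : Fin d | f j i = ⊤} = {i : Fin d | z i = ⊤} \ {i0} := by
        ext i
        simp only [hf, Set.mem_setOf_eq, Set.mem_diff, Set.mem_singleton_iff]
        by_cases hi : i = i0 <;> simp [hi]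
      rw [hset, Set.ncard_diff_singleton_of_mem hi0] at hj
      omega
    · intro hz f hmono hle
      by_contra hno
      push_neg at hno
      have hsub : ∀ j, {i : Fin d | f j i = ⊤} = {i : Fin d | z i = ⊤} := by
        intro j
        apply Set.eq_of_subset_of_ncard_le
        · intro i hi
          exact top_le_iff.mp ((Set.mem_setOf_eq ▸ hi) ▸ hle j i)
        · have h1 := hno j
          omega
        · exact Set.toFinite _
      set s := Finset.univ.filter (fun i : Fin d => z i ≠ ⊤) with hs
      set g : ℕ → ℕ := fun j => ∑ i ∈ s, (f j i).toNat with hg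
      have hfz : ∀ j k, k ∈ s → f j k ≠ ⊤ := by
        intro j k hk hfk
        exact (Finset.mem_filter.mp hk).2 (top_le_iff.mp (hfk ▸ hle j k))
      have hgmono : StrictMono g := by
        apply strictMono_nat_of_lt_succ
        intro j
        obtain ⟨hle', i, hlt⟩ := Pi.lt_def.mp (hmono j)
        have hizi : z i ≠ ⊤ := by
          intro hzi
          have h1 : i ∈ {i : Fin d | f j i = ⊤} := by rw [hsub j]; exact hzi
          rw [Set.mem_setOf_eq.mp h1] at hlt
          exact not_top_lt hlt
        apply Finset.sum_lt_sum
        · intro k hk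
          exact ENat.toNat_le_toNat (hle' k) (hfz (j + 1) k hk)
        · refine ⟨i, Finset.mem_filter.mpr ⟨Finset.mem_univ _, hizi⟩, ?_⟩
          exact enat_toNat_lt_toNat hlt
            (hfz (j + 1) i (Finset.mem_filter.mpr ⟨Finset.mem_univ _, hizi⟩))
      set B : ℕ := ∑ i ∈ s, (z i).toNat with hB
      have hbd : ∀ j, g j ≤ B := by
        intro j
        apply Finset.sum_le_sum
        intro k hk
        exact ENat.toNat_le_toNat (hle j k) (Finset.mem_filter.mp hk).2
      have h1 := hgmono.id_le (B + 1)
      have h2 := hbd (B + 1)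
      simp only [id_eq] at h1
      omega
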